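/- Let F, F₁, F₂, … : ℝⁿ → ℝ be convex functions, and let G, G₁, G₂, … : ℝⁿ → ℝ ∪ {+∞} denote their respective Legendre transforms. Then the sequence (F_j) decreases pointwise to F on ℝⁿ (i.e. F_j ≥ F_{j+1} for all j and F_j(x) → F(x) for every x) if and only if the sequence (G_j) increases pointwise to G on ℝⁿ (i.e. G_j ≤ G_{j+1} for all j and G_j(s) → G(s) in ℝ ∪ {+∞} for every s). -/

import Mathlib

open MeasureTheory Filter Topology RealInnerProductSpace

section aux

variable {n : ℕ}

local notation "E" => EuclideanSpace ℝ (Fin n)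

/-- Existence of a subgradient for a real-valued convex function on ℝⁿ. -/
lemma exists_subgradient_aux (F : E → ℝ) (hF : ConvexOn ℝ Set.univ F) (x : E) :
    ∃ s : E, ∀ y, F x + ⟪y - x, s⟫ ≤ F y := by
  have hcont : Continuous F := by
    rw [← continuousOn_univ]
    exact hF.continuousOn isOpen_univ
  -- strict epigraph
  set S : Set (E × ℝ) := {p | F p.1 < p.2} with hS
  have hSconv : Convex ℝ S := by
    intro p hp q hq a b ha hb hab
    simp only [hS, Set.mem_setOf_eq] at *
    calc F (a • p.1 + b • q.1) ≤ a * F p.1 + b * F q.1 :=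
          hF.2 (Set.mem_univ _) (Set.mem_univ _) ha hb hab
      _ < a * p.2 + b * q.2 := by
          rcases ha.lt_or_eq with ha' | ha'
          · rcases hb.lt_or_eq with hb' | hb'
            · exact add_lt_add (by nlinarith [hp]) (by nlinarith [hq])
            · have : a = 1 := by linarith
              simp [← hb', this]; nlinarith [hp]
          · have : b = 1 := by linarith
            simp [← ha', this]; nlinarith [hq]
      _ = (a • p + b • q).2 := by simp
  have hSopen : IsOpen S := isOpen_lt (hcont.comp continuous_fst) continuous_snd
  have hxS : (x, F x) ∉ S := by simp [hS]
  obtain ⟨f, hf⟩ := geometric_hahn_banach_open_point hSconv hSopen hxS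
  set g : E →L[ℝ] ℝ := f.comp (ContinuousLinearMap.inl ℝ E ℝ) with hg
  set c : ℝ := f (0, 1) with hc
  have hsplit : ∀ y : E, ∀ t : ℝ, f (y, t) = g y + t * c := by
    intro y t
    have : (y, t) = (y, (0:ℝ)) + t • ((0:E), (1:ℝ)) := by simp [Prod.ext_iff]
    rw [this, map_add, f.map_smul]
    simp [hg, hc, smul_eq_mul]
  have hfx : f (x, F x) = g x + F x * c := hsplit x (F x)
  have hcneg : c < 0 := by
    have h1 : f (x, F x + 1) < f (x, F x) := hf _ (by show F x < F x + 1; linarith)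
    rw [hsplit, hfx] at h1
    linarith
  have key : ∀ y : E, g y + F y * c ≤ g x + F x * c := by
    intro y
    by_contra h
    push_neg at h
    set gap : ℝ := g y + F y * c - (g x + F x * c) with hgap
    have hgap0 : 0 < gap := by linarith
    have hε : 0 < gap / (-c) := div_pos hgap0 (by linarith)
    have h2 : f (y, F y + gap / (-c)) < f (x, F x) :=
      hf _ (by show F y < F y + gap / (-c); linarith)
    rw [hsplit, hfx] at h2
    have hcne : c ≠ 0 := hcneg.ne
    have hdc : gap / (-c) * c = -gap := by
      rw [div_mul_eq_mul_div, div_neg, mul_div_assoc, div_self hcne, mul_one]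
    have : (F y + gap / (-c)) * c = F y * c - gap := by rw [add_mul, hdc]; ring
    rw [this] at h2
    linarith
  -- Riesz representation for g
  set v : E := (InnerProductSpace.toDual ℝ _).symm g with hv
  have hvg : ∀ y : E, ⟪v, y⟫ = g y := fun y => by
    rw [hv]; exact InnerProductSpace.toDual_symm_apply
  refine ⟨(-c)⁻¹ • v, fun y => ?_⟩
  have hk := key y
  have hyv : ⟪y, v⟫ = g y := by rw [real_inner_comm]; exact hvg y
  have hxv : ⟪x, v⟫ = g x := by rw [real_inner_comm]; exact hvg x
  have h3 : ⟪y - x, (-c)⁻¹ • v⟫ = (-c)⁻¹ * (g y - g x) := by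
    rw [real_inner_smul_right, inner_sub_left, hyv, hxv]
  rw [h3]
  have hc' : 0 < -c := by linarith
  have h5 : g y - g x ≤ (F y - F x) * (-c) := by nlinarith [hk]
  have h6 : (-c)⁻¹ * (g y - g x) ≤ (-c)⁻¹ * ((F y - F x) * (-c)) :=
    mul_le_mul_of_nonneg_left h5 (inv_nonneg.2 hc'.le)
  have h7 : (-c)⁻¹ * ((F y - F x) * (-c)) = F y - F x := by
    field_simp
    rw [mul_comm]; exact mul_div_cancel_right₀ _ hcneg.ne
  linarith

/-- Fenchel–Moreau biconjugation for real-valued convex functions on ℝⁿ. -/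
lemma biconj_aux (F : E → ℝ) (hF : ConvexOn ℝ Set.univ F) (x : E) :
    (F x : EReal) = ⨆ s : E, (((⟪x, s⟫ : ℝ) : EReal)
      - ⨆ y : E, ((⟪y, s⟫ - F y : ℝ) : EReal)) := by
  apply le_antisymm
  · obtain ⟨s₀, hs₀⟩ := exists_subgradient_aux F hF x
    have hG0 : (⨆ y : E, ((⟪y, s₀⟫ - F y : ℝ) : EReal)) = ((⟪x, s₀⟫ - F x : ℝ) : EReal) := by
      apply le_antisymm
      · refine iSup_le fun y => EReal.coe_le_coe_iff.2 ?_
        have := hs₀ y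
        rw [inner_sub_left] at this
        linarith
      · exact le_iSup (fun y : E => ((⟪y, s₀⟫ - F y : ℝ) : EReal)) x
    have : (F x : EReal) = ((⟪x, s₀⟫ : ℝ) : EReal)
        - ⨆ y : E, ((⟪y, s₀⟫ - F y : ℝ) : EReal) := by
      rw [hG0, ← EReal.coe_sub]
      norm_cast
      ring
    rw [this]
    exact le_iSup (fun s : E => (((⟪x, s⟫ : ℝ) : EReal)
      - ⨆ y : E, ((⟪y, s⟫ - F y : ℝ) : EReal))) s₀
  · refine iSup_le fun s => ?_
    have h1 : ((⟪x, s⟫ - F x : ℝ) : EReal) ≤ ⨆ y : E, ((⟪y, s⟫ - F y : ℝ) : EReal) :=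
      le_iSup (fun y : E => ((⟪y, s⟫ - F y : ℝ) : EReal)) x
    calc ((⟪x, s⟫ : ℝ) : EReal) - ⨆ y : E, ((⟪y, s⟫ - F y : ℝ) : EReal)
        ≤ ((⟪x, s⟫ : ℝ) : EReal) - ((⟪x, s⟫ - F x : ℝ) : EReal) :=
          EReal.sub_le_sub le_rfl h1
      _ = ((⟪x, s⟫ - (⟪x, s⟫ - F x) : ℝ) : EReal) := (EReal.coe_sub _ _).symm
      _ = (F x : EReal) := by norm_cast; ring

end aux

theorem legendre_decreasing_iff_increasing
    (n : ℕ) (F : EuclideanSpace ℝ (Fin n) → ℝ)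
    (Fj : ℕ → EuclideanSpace ℝ (Fin n) → ℝ)
    (hF : ConvexOn ℝ Set.univ F) (hFj : ∀ j, ConvexOn ℝ Set.univ (Fj j))
    (G : EuclideanSpace ℝ (Fin n) → EReal)
    (Gj : ℕ → EuclideanSpace ℝ (Fin n) → EReal)
    (hG : ∀ s, G s = ⨆ x, ((⟪x, s⟫ - F x : ℝ) : EReal))
    (hGj : ∀ j s, Gj j s = ⨆ x, ((⟪x, s⟫ - Fj j x : ℝ) : EReal)) :
    ((∀ j x, Fj (j + 1) x ≤ Fj j x) ∧
        ∀ x, Tendsto (fun j => Fj j x) atTop (nhds (F x)))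
      ↔ ((∀ j s, Gj j s ≤ Gj (j + 1) s) ∧
        ∀ s, Tendsto (fun j => Gj j s) atTop (nhds (G s))) := by
  constructor
  · rintro ⟨h1, h2⟩
    have anti : ∀ x, Antitone fun j => Fj j x := fun x =>
      antitone_nat_of_succ_le fun j => h1 j x
    have hFle : ∀ j x, F x ≤ Fj j x := by
      intro j x
      exact le_of_tendsto (h2 x) (eventually_atTop.2 ⟨j, fun k hk => anti x hk⟩)
    have mono : ∀ s, Monotone fun j => Gj j s := by
      intro s
      apply monotone_nat_of_le_succ
      intro j
      rw [hGj, hGj]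
      exact iSup_mono fun y => EReal.coe_le_coe_iff.2 (by linarith [h1 j y])
    refine ⟨fun j s => mono s (Nat.le_succ j), fun s => ?_⟩
    have hsup : (⨆ j, Gj j s) = G s := by
      rw [hG s]
      simp_rw [hGj]
      rw [iSup_comm]
      refine iSup_congr fun x => ?_
      have hmx : Monotone fun j => ((⟪x, s⟫ - Fj j x : ℝ) : EReal) := fun i k hik =>
        EReal.coe_le_coe_iff.2 (by linarith [anti x hik])
      have ht1 : Tendsto (fun j => ((⟪x, s⟫ - Fj j x : ℝ) : EReal)) atTop
          (𝓝 ((⟪x, s⟫ - F x : ℝ) : EReal)) :=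
        continuous_coe_real_ereal.continuousAt.tendsto.comp (tendsto_const_nhds.sub (h2 x))
      exact tendsto_nhds_unique (tendsto_atTop_iSup hmx) ht1
    rw [← hsup]
    exact tendsto_atTop_iSup (mono s)
  · rintro ⟨h1, h2⟩
    have mono : ∀ s, Monotone fun j => Gj j s := fun s =>
      monotone_nat_of_le_succ fun j => h1 j s
    have hGsup : ∀ s, G s = ⨆ j, Gj j s := fun s =>
      tendsto_nhds_unique (h2 s) (tendsto_atTop_iSup (mono s))
    have hGle : ∀ j s, Gj j s ≤ G s := by
      intro j s; rw [hGsup s]; exact le_iSup (fun j => Gj j s) j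
    -- biconjugation for each Fj and for F
    have hbFj : ∀ j x, (Fj j x : EReal) = ⨆ s, (((⟪x, s⟫ : ℝ) : EReal) - Gj j s) := by
      intro j x
      rw [biconj_aux (Fj j) (hFj j) x]
      exact iSup_congr fun s => by rw [hGj]
    have hbF : ∀ x, (F x : EReal) = ⨆ s, (((⟪x, s⟫ : ℝ) : EReal) - G s) := by
      intro x
      rw [biconj_aux F hF x]
      exact iSup_congr fun s => by rw [hG]
    have hstep : ∀ j x, Fj (j + 1) x ≤ Fj j x := by
      intro j x
      rw [← EReal.coe_le_coe_iff, hbFj, hbFj]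
      exact iSup_mono fun s => EReal.sub_le_sub le_rfl (h1 j s)
    have hFle : ∀ j x, F x ≤ Fj j x := by
      intro j x
      rw [← EReal.coe_le_coe_iff, hbFj, hbF]
      exact iSup_mono fun s => EReal.sub_le_sub le_rfl (hGle j s)
    refine ⟨hstep, fun x => ?_⟩
    have anti : ∀ x, Antitone fun j => Fj j x := fun x =>
      antitone_nat_of_succ_le fun j => hstep j x
    have hbdd : ∀ x, BddBelow (Set.range fun j => Fj j x) := fun x =>
      ⟨F x, by rintro _ ⟨j, rfl⟩; exact hFle j x⟩
    set L : EuclideanSpace ℝ (Fin n) → ℝ := fun x => ⨅ j, Fj j x with hL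
    have hLt : ∀ x, Tendsto (fun j => Fj j x) atTop (𝓝 (L x)) := fun x =>
      tendsto_atTop_ciInf (anti x) (hbdd x)
    have hLconv : ConvexOn ℝ Set.univ L := by
      refine ⟨convex_univ, fun p _ q _ a b ha hb hab => ?_⟩
      refine le_of_tendsto_of_tendsto' (hLt _)
        (((hLt p).const_mul a).add ((hLt q).const_mul b)) fun j => ?_
      have := (hFj j).2 (Set.mem_univ p) (Set.mem_univ q) ha hb hab
      simpa [smul_eq_mul] using this
    have hFL : ∀ x, F x ≤ L x := fun x => le_ciInf fun j => hFle j x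
    have hLFj : ∀ j x, L x ≤ Fj j x := fun j x => ciInf_le (hbdd x) j
    -- conjugate of L equals G
    have hGL : ∀ s, (⨆ y, ((⟪y, s⟫ - L y : ℝ) : EReal)) = G s := by
      intro s
      apply le_antisymm
      · rw [hG s]
        exact iSup_mono fun y => EReal.coe_le_coe_iff.2 (by linarith [hFL y])
      · rw [hGsup s]
        refine iSup_le fun j => ?_
        rw [hGj]
        exact iSup_mono fun y => EReal.coe_le_coe_iff.2 (by linarith [hLFj j y])
    have hLF : ∀ x, L x = F x := by
      intro x
      rw [← EReal.coe_eq_coe_iff, biconj_aux L hLconv x, hbF x]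
      exact iSup_congr fun s => by rw [hGL]
    rw [← hLF x]
    exact hLt x
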